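/- Let X be a real Hilbert space, ℒ : X → X a bounded self-adjoint operator, and ψ ∈ X (playing the role of φ') with ℒψ = 0. Suppose there exists c > 0 and a closed subspace Υ₀ = {u ∈ X : ⟨q, u⟩ = 0} (for some fixed q ∈ X with ⟨q, ψ⟩ = 0) such that ⟨ℒv, v⟩ ≥ c‖v‖² for all v ∈ Υ₀ ∩ {ψ}^⊥. Then there exist N > 0 and τ > 0 such that ⟨ℒv, v⟩ + 2N⟨q, v⟩² ≥ τ‖v‖² for all v ∈ {ψ}^⊥. -/

import Mathlib

open scoped RealInnerProductSpace

set_option maxHeartbeats 1600000 in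
/-- if the quadratic form of a bounded self-adjoint operator `ℒ` with
`ℒψ = 0` is coercive on `Υ₀ ∩ {ψ}^⊥`, where `Υ₀ = {u : ⟪q, u⟫ = 0}` and `⟪q, ψ⟫ = 0`,
then adding the penalization `2N⟪q, v⟫²` makes it coercive on all of `{ψ}^⊥`. -/
theorem penalized_coercivity {X : Type*} [NormedAddCommGroup X] [InnerProductSpace ℝ X]
    [CompleteSpace X] (L : X →L[ℝ] X)
    (hsa : ∀ u v : X, ⟪L u, v⟫ = ⟪u, L v⟫)
    (ψ q : X) (hq : q ≠ 0) (hLψ : L ψ = 0) (hqψ : ⟪q, ψ⟫ = 0)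
    (c : ℝ) (hc : 0 < c)
    (hcoer : ∀ v : X, ⟪q, v⟫ = 0 → ⟪ψ, v⟫ = 0 → ⟪L v, v⟫ ≥ c * ‖v‖ ^ 2) :
    ∃ N > (0:ℝ), ∃ τ > (0:ℝ), ∀ v : X, ⟪ψ, v⟫ = 0 →
      ⟪L v, v⟫ + 2 * N * ⟪q, v⟫ ^ 2 ≥ τ * ‖v‖ ^ 2 := by
  set M := ‖L‖ with hMdef
  have hqn : (0:ℝ) < ‖q‖ := norm_pos_iff.mpr hq
  have hM0 : (0:ℝ) ≤ M := norm_nonneg L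
  have hψq : ⟪ψ, q⟫ = 0 := by rw [real_inner_comm]; exact hqψ
  set N : ℝ := (2 * (M * ‖q‖) ^ 2 / c + M * ‖q‖ ^ 2 + (c / 2) * ‖q‖ ^ 2)
      / (2 * ‖q‖ ^ 4) + 1 with hNdef
  clear_value N
  have hNpos : 0 < N := by
    have h1 : 0 ≤ (2 * (M * ‖q‖) ^ 2 / c + M * ‖q‖ ^ 2 + (c / 2) * ‖q‖ ^ 2)
        / (2 * ‖q‖ ^ 4) := by positivity
    rw [hNdef]; linarith
  refine ⟨N, hNpos, c / 2, by linarith, ?_⟩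
  intro v hψv
  set a : ℝ := ⟪q, v⟫ / ‖q‖ ^ 2 with ha
  clear_value a
  set w : X := v - a • q with hw
  clear_value w
  have hqq : ⟪q, q⟫ = ‖q‖ ^ 2 := real_inner_self_eq_norm_sq q
  have hqw : ⟪q, w⟫ = 0 := by
    rw [hw, inner_sub_right, real_inner_smul_right, hqq, ha]
    field_simp
    ring
  have hwq : ⟪w, q⟫ = 0 := by rw [real_inner_comm]; exact hqw
  have hψw : ⟪ψ, w⟫ = 0 := by
    rw [hw, inner_sub_right, real_inner_smul_right, hψv, hψq]; ring
  have hcw := hcoer w hqw hψw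
  have hv : v = w + a • q := by rw [hw]; abel
  have hqv : ⟪q, v⟫ = a * ‖q‖ ^ 2 := by
    rw [hv, inner_add_right, real_inner_smul_right, hqq, hqw]; ring
  have hcross : ⟪L q, w⟫ = ⟪L w, q⟫ := by
    rw [hsa q w, real_inner_comm]
  have hexp : ⟪L v, v⟫ = ⟪L w, w⟫ + 2 * a * ⟪L w, q⟫ + a ^ 2 * ⟪L q, q⟫ := by
    rw [hv]
    simp only [map_add, map_smul, inner_add_left, inner_add_right,
      real_inner_smul_left, real_inner_smul_right, ContinuousLinearMap.coe_smul',
      Pi.smul_apply, smul_eq_mul]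
    rw [hcross]; ring
  have hnv : ‖v‖ ^ 2 = ‖w‖ ^ 2 + a ^ 2 * ‖q‖ ^ 2 := by
    have h := norm_add_sq_real w (a • q)
    rw [← hv, real_inner_smul_right, hwq, norm_smul] at h
    rw [h]
    simp [mul_pow, sq_abs]
  have hb1 : |⟪L w, q⟫| ≤ M * ‖w‖ * ‖q‖ := by
    calc |⟪L w, q⟫| ≤ ‖L w‖ * ‖q‖ := abs_real_inner_le_norm _ _
    _ ≤ M * ‖w‖ * ‖q‖ := by
        have := L.le_opNorm w
        nlinarith [norm_nonneg (L w), norm_nonneg q]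
  have hb2 : |⟪L q, q⟫| ≤ M * ‖q‖ ^ 2 := by
    calc |⟪L q, q⟫| ≤ ‖L q‖ * ‖q‖ := abs_real_inner_le_norm _ _
    _ ≤ M * ‖q‖ ^ 2 := by
        have := L.le_opNorm q
        nlinarith [norm_nonneg (L q)]
  have hb1' := abs_le.mp hb1
  have hb2' := abs_le.mp hb2
  have hq4ne : (2 * ‖q‖ ^ 4) ≠ 0 := by positivity
  have hNq : N * (2 * ‖q‖ ^ 4) = 2 * (M * ‖q‖) ^ 2 / c + M * ‖q‖ ^ 2
      + (c / 2) * ‖q‖ ^ 2 + 2 * ‖q‖ ^ 4 := by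
    rw [hNdef, add_mul, div_mul_cancel₀ _ hq4ne]; ring
  have h2Na : 2 * N * (a * ‖q‖ ^ 2) ^ 2 = a ^ 2 * (2 * (M * ‖q‖) ^ 2 / c
      + M * ‖q‖ ^ 2 + (c / 2) * ‖q‖ ^ 2 + 2 * ‖q‖ ^ 4) := by
    rw [show 2 * N * (a * ‖q‖ ^ 2) ^ 2 = a ^ 2 * (N * (2 * ‖q‖ ^ 4)) from by ring, hNq]
  rw [hexp, hqv, hnv]
  set Iww := ⟪L w, w⟫ with hIww
  clear_value Iww
  set Iwq := ⟪L w, q⟫ with hIwq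
  clear_value Iwq
  set Iqq := ⟪L q, q⟫ with hIqq
  clear_value Iqq
  set nw := ‖w‖ with hnw
  clear_value nw
  set nq := ‖q‖ with hnq
  clear_value nq
  clear hIww hIwq hIqq hnw hnq hexp hqv hnv hqq hqw hwq hψw hv hcross hψq ha hw hsa hLψ hqψ hcoer hψv hq hMdef hNdef
  have h5 : a * Iwq ≥ -(|a| * (M * nw * nq)) := by
    have h6 : |a * Iwq| ≤ |a| * (M * nw * nq) := by
      rw [abs_mul]
      exact mul_le_mul_of_nonneg_left hb1 (abs_nonneg a)
    have h7 := neg_abs_le (a * Iwq)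
    linarith [(abs_le.mp h6).1]
  have hkey : 2 * a * Iwq ≥ -(c / 2 * nw ^ 2 + 2 / c * a ^ 2 * M ^ 2 * nq ^ 2) := by
    have hsq := sq_nonneg (c * nw - 2 * |a| * M * nq)
    have haa : |a| ^ 2 = a ^ 2 := sq_abs a
    have h10 : 4 * c * (|a| * (M * nw * nq)) ≤ c ^ 2 * nw ^ 2 + 4 * a ^ 2 * M ^ 2 * nq ^ 2 := by
      nlinarith [hsq, haa]
    have h12 : (c ^ 2 * nw ^ 2 + 4 * a ^ 2 * M ^ 2 * nq ^ 2) / (2 * c)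
        = c / 2 * nw ^ 2 + 2 / c * a ^ 2 * M ^ 2 * nq ^ 2 := by
      field_simp; ring
    have h13 : 2 * (|a| * (M * nw * nq))
        ≤ (c ^ 2 * nw ^ 2 + 4 * a ^ 2 * M ^ 2 * nq ^ 2) / (2 * c) := by
      rw [le_div_iff₀ (by positivity)]
      nlinarith [h10]
    rw [h12] at h13
    linarith [h5]
  have hLqq : a ^ 2 * Iqq ≥ a ^ 2 * (-(M * nq ^ 2)) :=
    mul_le_mul_of_nonneg_left hb2'.1 (sq_nonneg a)
  have hq4 : (0:ℝ) ≤ a ^ 2 * nq ^ 4 := by positivity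
  ring_nf at hcw hkey hLqq h2Na hq4 ⊢
  linarith
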